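/- Let 𝔤 be a finite-dimensional semisimple Lie algebra over an algebraically closed field 𝔽 of characteristic not 2 or 3, let (ρ, V) be a representation of 𝔤 with no trivial subrepresentation (no nonzero v ∈ V with ρ(x)v = 0 for all x ∈ 𝔤), and let ψ : 𝔤 → V be a linear kernel vector. Then the image of ψ is a ρ-invariant subspace of V, and ψ induces an isomorphism of 𝔤-representations between the quotient algebra 𝔤/ker(ψ) equipped with the adjoint action and the subrepresentation im(ψ) ≤ V; in particular, ψ is 𝔤-equivariant: ψ([x,y]) = ρ(x)ψ(y) for all x, y ∈ 𝔤, and ker(ψ) is an ideal of 𝔤. -/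

import Mathlib

attribute [local instance] LieRing.ofAssociativeRing

namespace LKVaux

variable {𝔽 V 𝔤 : Type*} [Field 𝔽]
  [LieRing 𝔤] [LieAlgebra 𝔽 𝔤] [AddCommGroup V] [Module 𝔽 V]
  (ρ : 𝔤 →ₗ⁅𝔽⁆ Module.End 𝔽 V) (ψ : 𝔤 →ₗ[𝔽] V)

lemma polar (hψ : ∀ x : 𝔤, ρ x (ψ x) = 0) (x y : 𝔤) : ρ x (ψ y) = - ρ y (ψ x) := by
  have h := hψ (x + y)
  simp only [map_add, map_add, LinearMap.add_apply, hψ x, hψ y] at h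
  rw [eq_neg_iff_add_eq_zero]
  simp only [zero_add, add_zero] at h
  rw [add_comm] at h
  exact h

lemma psi_br (hψ : ∀ x : 𝔤, ρ x (ψ x) = 0) (x y z : 𝔤) :
    ρ x (ψ ⁅y, z⁆) = ρ z (ρ y (ψ x)) - ρ y (ρ z (ψ x)) := by
  rw [polar ρ ψ hψ x ⁅y, z⁆, LieHom.map_lie, Ring.lie_def]
  simp only [LinearMap.sub_apply, Module.End.mul_apply, neg_sub]

/-- The fundamental trilinear map `Φ(a,b,c) = ρ a (F b c)` where
`F b c = ψ ⁅b,c⁆ - ρ b (ψ c)`. -/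
def Phi (a b c : 𝔤) : V := ρ a (ψ ⁅b, c⁆) - ρ a (ρ b (ψ c))

lemma Phi_add1 (u v b c : 𝔤) :
    Phi ρ ψ (u + v) b c = Phi ρ ψ u b c + Phi ρ ψ v b c := by
  simp only [Phi, map_add, LinearMap.add_apply]
  abel

lemma Phi_add2 (a u v c : 𝔤) :
    Phi ρ ψ a (u + v) c = Phi ρ ψ a u c + Phi ρ ψ a v c := by
  simp only [Phi, add_lie, map_add, LinearMap.add_apply, map_add]
  abel

lemma Phi_add3 (a b u v : 𝔤) :
    Phi ρ ψ a b (u + v) = Phi ρ ψ a b u + Phi ρ ψ a b v := by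
  simp only [Phi, lie_add, map_add, LinearMap.add_apply, map_add]
  abel

lemma FI (hψ : ∀ x : 𝔤, ρ x (ψ x) = 0) (w a b c : 𝔤) :
    2 • (2 • (ρ w (Phi ρ ψ a b c))
        - (Phi ρ ψ ⁅w, a⁆ b c + Phi ρ ψ a ⁅w, b⁆ c + Phi ρ ψ a b ⁅w, c⁆))
      + (ρ ⁅w, a⁆ (ψ ⁅b, c⁆) + ρ ⁅b, c⁆ (ψ ⁅w, a⁆))
      + (ρ ⁅w, b⁆ (ψ ⁅a, c⁆) + ρ ⁅a, c⁆ (ψ ⁅w, b⁆))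
      - (ρ ⁅w, c⁆ (ψ ⁅a, b⁆) + ρ ⁅a, b⁆ (ψ ⁅w, c⁆)) = 0 := by
  have pol := polar ρ ψ hψ
  have L2 := psi_br ρ ψ hψ
  simp only [Phi, L2, LieHom.map_lie, Ring.lie_def, LinearMap.sub_apply,
    Module.End.mul_apply, map_sub, map_neg, map_add, pol b a, pol c a, pol c b,
    pol w a, pol w b, pol w c, neg_neg, neg_sub, map_zero]
  abel

lemma key (h2 : (2 : 𝔽) ≠ 0) (hψ : ∀ x : 𝔤, ρ x (ψ x) = 0) (w a b c : 𝔤) :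
    (2 : 𝔽) • (ρ w (Phi ρ ψ a b c)) =
      Phi ρ ψ ⁅w, a⁆ b c + Phi ρ ψ a ⁅w, b⁆ c + Phi ρ ψ a b ⁅w, c⁆ := by
  have pol := polar ρ ψ hψ
  have e1 : ρ ⁅w, a⁆ (ψ ⁅b, c⁆) + ρ ⁅b, c⁆ (ψ ⁅w, a⁆) = 0 := by
    rw [pol ⁅w, a⁆ ⁅b, c⁆]; exact neg_add_cancel _
  have e2 : ρ ⁅w, b⁆ (ψ ⁅a, c⁆) + ρ ⁅a, c⁆ (ψ ⁅w, b⁆) = 0 := by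
    rw [pol ⁅w, b⁆ ⁅a, c⁆]; exact neg_add_cancel _
  have e3 : ρ ⁅w, c⁆ (ψ ⁅a, b⁆) + ρ ⁅a, b⁆ (ψ ⁅w, c⁆) = 0 := by
    rw [pol ⁅w, c⁆ ⁅a, b⁆]; exact neg_add_cancel _
  have h := FI ρ ψ hψ w a b c
  rw [e1, e2, e3] at h
  simp only [add_zero, sub_zero] at h
  set X := ρ w (Phi ρ ψ a b c) with hX
  set S := Phi ρ ψ ⁅w, a⁆ b c + Phi ρ ψ a ⁅w, b⁆ c + Phi ρ ψ a b ⁅w, c⁆ with hS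
  have hu : (2 : 𝔽) • ((2 : 𝔽) • X - S) = 0 := by
    have : (2 : 𝔽) • ((2 : 𝔽) • X - S) = 2 • (2 • X - S) := by
      simp only [two_smul, two_nsmul]
    rw [this]; exact h
  have := inv_smul_smul₀ h2 ((2 : 𝔽) • X - S)
  rw [hu, smul_zero] at this
  have h0 : (2 : 𝔽) • X - S = 0 := this.symm
  rw [sub_eq_zero] at h0
  exact h0


lemma brkt (h2 : (2 : 𝔽) ≠ 0) (hψ : ∀ x : 𝔤, ρ x (ψ x) = 0) (w x a b c : 𝔤) :
    ρ ⁅w, x⁆ (Phi ρ ψ a b c) = 0 := by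
  have k := key ρ ψ h2 hψ
  have A : ∀ w x : 𝔤, (2 : 𝔽) • ((2 : 𝔽) • (ρ w (ρ x (Phi ρ ψ a b c)))) =
      (Phi ρ ψ ⁅w, ⁅x, a⁆⁆ b c + Phi ρ ψ ⁅x, a⁆ ⁅w, b⁆ c + Phi ρ ψ ⁅x, a⁆ b ⁅w, c⁆)
    + (Phi ρ ψ ⁅w, a⁆ ⁅x, b⁆ c + Phi ρ ψ a ⁅w, ⁅x, b⁆⁆ c + Phi ρ ψ a ⁅x, b⁆ ⁅w, c⁆)
    + (Phi ρ ψ ⁅w, a⁆ b ⁅x, c⁆ + Phi ρ ψ a ⁅w, b⁆ ⁅x, c⁆ + Phi ρ ψ a b ⁅w, ⁅x, c⁆⁆) := by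
    intro w x
    calc (2 : 𝔽) • ((2 : 𝔽) • (ρ w (ρ x (Phi ρ ψ a b c))))
        = (2 : 𝔽) • (ρ w ((2 : 𝔽) • (ρ x (Phi ρ ψ a b c)))) := by
          rw [map_smul]
      _ = (2 : 𝔽) • (ρ w (Phi ρ ψ ⁅x, a⁆ b c + Phi ρ ψ a ⁅x, b⁆ c + Phi ρ ψ a b ⁅x, c⁆)) := by
          rw [k x a b c]
      _ = (2 : 𝔽) • (ρ w (Phi ρ ψ ⁅x, a⁆ b c)) + (2 : 𝔽) • (ρ w (Phi ρ ψ a ⁅x, b⁆ c))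
            + (2 : 𝔽) • (ρ w (Phi ρ ψ a b ⁅x, c⁆)) := by
          rw [map_add, map_add, smul_add, smul_add]
      _ = _ := by rw [k w ⁅x, a⁆ b c, k w a ⁅x, b⁆ c, k w a b ⁅x, c⁆]
  have C : (2 : 𝔽) • ((2 : 𝔽) • (ρ ⁅w, x⁆ (Phi ρ ψ a b c))) =
      Phi ρ ψ ⁅⁅w, x⁆, a⁆ b c + Phi ρ ψ a ⁅⁅w, x⁆, b⁆ c + Phi ρ ψ a b ⁅⁅w, x⁆, c⁆ := by
    have hwx : ρ ⁅w, x⁆ (Phi ρ ψ a b c)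
        = ρ w (ρ x (Phi ρ ψ a b c)) - ρ x (ρ w (Phi ρ ψ a b c)) := by
      rw [LieHom.map_lie, Ring.lie_def]
      simp only [LinearMap.sub_apply, Module.End.mul_apply]
    rw [hwx, smul_sub, smul_sub, A w x, A x w,
      leibniz_lie w x a, leibniz_lie w x b, leibniz_lie w x c,
      Phi_add1, Phi_add2, Phi_add3]
    abel
  have D := k ⁅w, x⁆ a b c
  rw [← D] at C
  -- C : 2 • (2 • u) = 2 • u  with u := ρ ⁅w,x⁆ (Phi ρ ψ a b c)
  set u := ρ ⁅w, x⁆ (Phi ρ ψ a b c) with hu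
  have h1 : (2 : 𝔽) • u = u := by
    have := congrArg (fun v => ((2 : 𝔽)⁻¹) • v) C
    simpa [inv_smul_smul₀ h2] using this
  have h2u : u + u = u := by rw [← two_smul 𝔽 u, h1]
  have : u = 0 := by
    have := congrArg (fun v => v - u) h2u
    simpa using this
  exact this


lemma perfect [LieAlgebra.IsSemisimple 𝔽 𝔤] :
    ⁅(⊤ : LieIdeal 𝔽 𝔤), (⊤ : LieIdeal 𝔽 𝔤)⁆ = ⊤ := by
  set D : LieIdeal 𝔽 𝔤 := ⁅(⊤ : LieIdeal 𝔽 𝔤), (⊤ : LieIdeal 𝔽 𝔤)⁆ with hD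
  have habel : IsLieAbelian ↥(Dᶜ : LieIdeal 𝔽 𝔤) := by
    constructor
    intro a b
    have h1 : (⁅(a : 𝔤), (b : 𝔤)⁆ : 𝔤) ∈ D :=
      LieSubmodule.lie_mem_lie (LieSubmodule.mem_top _) (LieSubmodule.mem_top _)
    have h2 : (⁅(a : 𝔤), (b : 𝔤)⁆ : 𝔤) ∈ (Dᶜ : LieIdeal 𝔽 𝔤) :=
      (Dᶜ : LieIdeal 𝔽 𝔤).lie_mem b.2
    have h3 : (⁅(a : 𝔤), (b : 𝔤)⁆ : 𝔤) ∈ (D ⊓ Dᶜ : LieIdeal 𝔽 𝔤) := ⟨h1, h2⟩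
    rw [inf_compl_eq_bot] at h3
    have h4 : (⁅(a : 𝔤), (b : 𝔤)⁆ : 𝔤) = 0 := by
      simpa using h3
    ext
    simpa using h4
  have hbot : (Dᶜ : LieIdeal 𝔽 𝔤) = ⊥ :=
    (LieAlgebra.hasTrivialRadical_iff_no_abelian_ideals 𝔽 𝔤).mp inferInstance _ habel
  have := sup_compl_eq_top (x := D)
  rw [hbot, sup_bot_eq] at this
  exact this


lemma equivariant [LieAlgebra.IsSemisimple 𝔽 𝔤] (h2 : (2 : 𝔽) ≠ 0)
    (htriv : ∀ v : V, (∀ x : 𝔤, ρ x v = 0) → v = 0)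
    (hψ : ∀ x : 𝔤, ρ x (ψ x) = 0) (x y : 𝔤) : ψ ⁅x, y⁆ = ρ x (ψ y) := by
  have hspan : ∀ u a b c : 𝔤, ρ u (Phi ρ ψ a b c) = 0 := by
    intro u a b c
    have hmem : u ∈ ⁅(⊤ : LieIdeal 𝔽 𝔤), (⊤ : LieIdeal 𝔽 𝔤)⁆ := by
      rw [perfect]; exact LieSubmodule.mem_top _
    rw [← LieSubmodule.mem_toSubmodule,
      LieSubmodule.lieIdeal_oper_eq_linear_span'] at hmem
    refine Submodule.span_induction ?_ ?_ ?_ ?_ hmem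
    · rintro t ⟨p, -, q, -, rfl⟩
      exact brkt ρ ψ h2 hψ p q a b c
    · rw [map_zero, LinearMap.zero_apply]
    · intro p q _ _ hp hq
      rw [map_add, LinearMap.add_apply, hp, hq, add_zero]
    · intro t p _ hp
      rw [map_smul, LinearMap.smul_apply, hp, smul_zero]
  have hPhi : ∀ a b c : 𝔤, Phi ρ ψ a b c = 0 := fun a b c =>
    htriv _ (fun u => hspan u a b c)
  have hF : ∀ a : 𝔤, ρ a (ψ ⁅x, y⁆ - ρ x (ψ y)) = 0 := by
    intro a
    have := hPhi a x y
    simpa [Phi, map_sub] using this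
  have := htriv _ hF
  rwa [sub_eq_zero] at this

end LKVaux


/-- For a finite-dimensional semisimple Lie algebra over an algebraically closed field of
characteristic not 2 or 3, and a representation `(ρ, V)` with no trivial subrepresentation,
a nonzero linear kernel vector `ψ` is `𝔤`-equivariant, its kernel is an ideal, its image is a
`ρ`-invariant subspace, and `ψ` induces an isomorphism of `𝔤`-representations between
`𝔤 / ker ψ` (with the adjoint action) and `im ψ`. -/
theorem linearKernelVector_induces_iso {𝔽 : Type*} [Field 𝔽] [IsAlgClosed 𝔽]
    (h2 : ringChar 𝔽 ≠ 2) (h3 : ringChar 𝔽 ≠ 3)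
    {𝔤 V : Type*} [LieRing 𝔤] [LieAlgebra 𝔽 𝔤] [Module.Finite 𝔽 𝔤]
    [LieAlgebra.IsSemisimple 𝔽 𝔤] [AddCommGroup V] [Module 𝔽 V]
    (ρ : 𝔤 →ₗ⁅𝔽⁆ Module.End 𝔽 V)
    (htriv : ∀ v : V, (∀ x : 𝔤, ρ x v = 0) → v = 0)
    (ψ : 𝔤 →ₗ[𝔽] V) (hψ0 : ψ ≠ 0) (hψ : ∀ x : 𝔤, ρ x (ψ x) = 0) :
    (∀ x : 𝔤, ∀ v ∈ LinearMap.range ψ, ρ x v ∈ LinearMap.range ψ) ∧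
    (∀ x y : 𝔤, ψ ⁅x, y⁆ = ρ x (ψ y)) ∧
    (∀ x y : 𝔤, y ∈ LinearMap.ker ψ → ⁅x, y⁆ ∈ LinearMap.ker ψ) ∧
    ∃ e : (𝔤 ⧸ LinearMap.ker ψ) ≃ₗ[𝔽] LinearMap.range ψ,
      (∀ y : 𝔤, (e (Submodule.Quotient.mk y) : V) = ψ y) ∧
      (∀ x y : 𝔤, (e (Submodule.Quotient.mk ⁅x, y⁆) : V) =
        ρ x (e (Submodule.Quotient.mk y))) := by
  haveI := ringChar.charP 𝔽
  have h2' : (2 : 𝔽) ≠ 0 := by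
    intro h
    have hd : ringChar 𝔽 ∣ 2 :=
      (CharP.cast_eq_zero_iff 𝔽 (ringChar 𝔽) 2).mp (by exact_mod_cast h)
    rcases (Nat.dvd_prime Nat.prime_two).mp hd with h1 | h1
    · exact CharP.char_ne_one 𝔽 (ringChar 𝔽) h1
    · exact h2 h1
  have heq : ∀ x y : 𝔤, ψ ⁅x, y⁆ = ρ x (ψ y) :=
    LKVaux.equivariant ρ ψ h2' htriv hψ
  refine ⟨?_, heq, ?_, ?_⟩
  · rintro x v ⟨y, rfl⟩
    exact ⟨⁅x, y⁆, heq x y⟩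
  · intro x y hy
    rw [LinearMap.mem_ker] at hy ⊢
    rw [heq x y, hy, map_zero]
  · refine ⟨ψ.quotKerEquivRange, fun y => ψ.quotKerEquivRange_apply_mk y, ?_⟩
    intro x y
    rw [ψ.quotKerEquivRange_apply_mk, ψ.quotKerEquivRange_apply_mk, heq x y]
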